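/- If n = h + d with h > 0 and d > 0 integers, then (h/n)^n > exp(-d - d^2/h). -/

import Mathlib

theorem stmt_0 (h d n : ℕ) (hh : 0 < h) (hd : 0 < d) (hn : n = h + d) :
    ((h : ℝ) / n) ^ n > Real.exp (-(d : ℝ) - (d : ℝ) ^ 2 / h) := by
  have hh' : (0 : ℝ) < h := by exact_mod_cast hh
  have hd' : (0 : ℝ) < d := by exact_mod_cast hd
  have hn' : (n : ℝ) = h + d := by rw [hn]; push_cast; ring
  have hnpos : (0 : ℝ) < n := by rw [hn']; linarith
  have hpos : (0 : ℝ) < (h : ℝ) / n := div_pos hh' hnpos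
  have key : ((h : ℝ) / n) ^ n = Real.exp ((n : ℝ) * Real.log ((h : ℝ) / n)) := by
    rw [← Real.log_pow, Real.exp_log (pow_pos hpos n)]
  rw [key, gt_iff_lt, Real.exp_lt_exp]
  have hlog : Real.log ((n : ℝ) / h) < (d : ℝ) / h := by
    have h1 : (n : ℝ) / h = 1 + d / h := by
      rw [hn']; field_simp
    rw [h1]
    have := Real.add_one_lt_exp (x := (d : ℝ) / h) (by positivity)
    calc Real.log (1 + d / h) < Real.log (Real.exp ((d : ℝ) / h)) := by
          apply Real.log_lt_log (by positivity); linarith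
      _ = (d : ℝ) / h := Real.log_exp _
  have hlog2 : Real.log ((h : ℝ) / n) = - Real.log ((n : ℝ) / h) := by
    rw [Real.log_div (ne_of_gt hh') (ne_of_gt hnpos),
        Real.log_div (ne_of_gt hnpos) (ne_of_gt hh')]; ring
  rw [hlog2]
  have hmul : (n : ℝ) * ((d : ℝ) / h) = d + (d : ℝ) ^ 2 / h := by
    rw [hn']; field_simp
  nlinarith [mul_lt_mul_of_pos_left hlog hnpos]
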